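/- arXiv:1503.00187 — 2 statements merged into one kernel-verified Lean document; each statement's English description precedes it below -/
import Mathlib

section
/- If two continuous maps f, g from a compact smooth manifold N of dimension n-1 into S^{n-1} have different degrees mod 2, then there exists a point x ∈ N with f(x) = g(x). -/
/-- The coincidence property (mod 2) of the sphere: if `N` is a compact manifold
of dimension `n-1` and `f, g : N → S^{n-1}` are continuous maps with different
degrees mod 2, then `f` and `g` have a coincidence point.  The degree mod 2 is
formalized as any `ZMod 2`-valued invariant `deg` of continuous maps
`N → S^{n-1}` which is homotopy invariant and satisfies
`deg (σ ∘ g) = deg σ * deg g` where the antipodal map `σ` has degree 1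
(equivalently, `deg (σ ∘ g) = deg g`). -/
theorem exists_coincidence_of_degree_ne
    {n : ℕ} {N : Type*} [TopologicalSpace N] [CompactSpace N]
    [ChartedSpace (EuclideanSpace ℝ (Fin (n - 1))) N]
    (deg : C(N, Metric.sphere (0 : EuclideanSpace ℝ (Fin n)) 1) → ZMod 2)
    (deg_homotopy_invariant : ∀ f g, f.Homotopic g → deg f = deg g)
    (deg_antipodal : ∀ g : C(N, Metric.sphere (0 : EuclideanSpace ℝ (Fin n)) 1),
      deg ⟨fun x => -(g x), (continuous_neg.comp g.continuous)⟩ = deg g)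
    (f g : C(N, Metric.sphere (0 : EuclideanSpace ℝ (Fin n)) 1))
    (hdeg : deg f ≠ deg g) :
    ∃ x : N, f x = g x := by
  by_contra hc
  push_neg at hc
  set E := EuclideanSpace ℝ (Fin n) with hE
  have hf1 : ∀ x, ‖(f x : E)‖ = 1 := fun x => by
    simpa using mem_sphere_zero_iff_norm.mp (f x).2
  have hg1 : ∀ x, ‖(g x : E)‖ = 1 := fun x => by
    simpa using mem_sphere_zero_iff_norm.mp (g x).2
  -- the straight-line from f x to -(g x) avoids 0
  have hne : ∀ (t : unitInterval) (x : N),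
      (1 - (t : ℝ)) • (f x : E) + (t : ℝ) • (-(g x : E)) ≠ 0 := by
    intro t x h0
    have heq : (1 - (t : ℝ)) • (f x : E) = (t : ℝ) • (g x : E) := by
      linear_combination (norm := module) h0
    have hnorm : |1 - (t : ℝ)| = |(t : ℝ)| := by
      have := congrArg norm heq
      simpa [norm_smul, hf1 x, hg1 x, Real.norm_eq_abs] using this
    obtain ⟨t, ht0, ht1⟩ := t
    simp only [Set.mem_Icc] at *
    rw [abs_of_nonneg (by linarith), abs_of_nonneg ht0] at hnorm
    have ht : t = 1 / 2 := by linarith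
    subst ht
    have : (f x : E) = (g x : E) := by
      have h2 : (1 - (1:ℝ)/2) = (1:ℝ)/2 := by norm_num
      rw [h2] at heq
      have := smul_right_injective E (by norm_num : ((1:ℝ)/2) ≠ 0) heq
      exact this
    exact hc x (Subtype.ext this)
  -- the normalized homotopy
  let F : C(unitInterval × N, E) :=
    ⟨fun p => (1 - (p.1 : ℝ)) • (f p.2 : E) + (p.1 : ℝ) • (-(g p.2 : E)), by
      apply Continuous.add
      · exact ((continuous_const.sub (continuous_subtype_val.comp continuous_fst)).smul
          (continuous_subtype_val.comp (f.continuous.comp continuous_snd)))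
      · exact ((continuous_subtype_val.comp continuous_fst).smul
          ((continuous_subtype_val.comp (g.continuous.comp continuous_snd)).neg))⟩
  have hFne : ∀ p : unitInterval × N, F p ≠ 0 := fun p => hne p.1 p.2
  have hmem : ∀ p : unitInterval × N,
      ‖F p‖⁻¹ • F p ∈ Metric.sphere (0 : E) 1 := by
    intro p
    rw [mem_sphere_zero_iff_norm, norm_smul, norm_inv, norm_norm,
      inv_mul_cancel₀ (norm_ne_zero_iff.mpr (hFne p))]
  let mg : C(N, Metric.sphere (0 : E) 1) :=
    ⟨fun x => -(g x), (continuous_neg.comp g.continuous)⟩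
  have H : ContinuousMap.Homotopy f mg :=
    { toFun := fun p => ⟨‖F p‖⁻¹ • F p, hmem p⟩
      continuous_toFun := by
        apply Continuous.subtype_mk
        exact ((F.continuous.norm.inv₀ fun p =>
          norm_ne_zero_iff.mpr (hFne p)).smul F.continuous)
      map_zero_left := fun x => by
        ext1
        show ‖F ((0 : unitInterval), x)‖⁻¹ • F ((0 : unitInterval), x) = (f x : E)
        have hF0 : F ((0 : unitInterval), x) = (f x : E) := by
          show (1 - ((0 : unitInterval) : ℝ)) • (f x : E) +
            ((0 : unitInterval) : ℝ) • (-(g x : E)) = (f x : E)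
          simp
        rw [hF0, hf1 x]; simp
      map_one_left := fun x => by
        ext1
        show ‖F ((1 : unitInterval), x)‖⁻¹ • F ((1 : unitInterval), x) = (mg x : E)
        have hF1 : F ((1 : unitInterval), x) = -(g x : E) := by
          show (1 - ((1 : unitInterval) : ℝ)) • (f x : E) +
            ((1 : unitInterval) : ℝ) • (-(g x : E)) = -(g x : E)
          simp
        have : (mg x : E) = -(g x : E) := rfl
        rw [hF1, this, norm_neg, hg1 x]; simp }
  have h1 : deg f = deg mg := deg_homotopy_invariant f mg ⟨H⟩
  have h2 : deg mg = deg g := deg_antipodal g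
  exact hdeg (h1.trans h2)
end

section
/- Let f : ℝ → ℝ be continuous with f(0) < 0 and f(T) < 0 for some T > 0, and suppose Z = {t ∈ (0,T) : f(t) = 0} is finite and f changes sign at each point of Z. Then Z has an even number of elements. -/
open Set

/-- General version on an interval `(a,b)`. -/
lemma even_sign_changes_aux (n : ℕ) :
    ∀ (f : ℝ → ℝ), Continuous f → ∀ a b : ℝ, a < b → f a < 0 → f b < 0 →
    ∀ (hfin : {t ∈ Set.Ioo a b | f t = 0}.Finite),
    (∀ t₀ ∈ {t ∈ Set.Ioo a b | f t = 0}, ∃ δ > (0 : ℝ),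
      ∀ s s', t₀ - δ < s → s < t₀ → t₀ < s' → s' < t₀ + δ →
        f s * f s' < 0) →
    {t ∈ Set.Ioo a b | f t = 0}.ncard = n → Even n := by
  induction n using Nat.strong_induction_on with
  | _ n IH =>
    intro f hf a b hab ha hb hfin hsign hcard
    set Z := {t ∈ Set.Ioo a b | f t = 0} with hZ
    rcases Z.eq_empty_or_nonempty with hZe | hZne
    · rw [hZe] at hcard
      simp at hcard
      simp [← hcard]
    -- t₁ : least zero
    have hne : hfin.toFinset.Nonempty := by
      rwa [Set.Finite.toFinset_nonempty]
    set t₁ := hfin.toFinset.min' hne with ht₁def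
    have ht₁Z : t₁ ∈ Z := by
      have := hfin.toFinset.min'_mem hne
      rwa [Set.Finite.mem_toFinset] at this
    have ht₁min : ∀ t ∈ Z, t₁ ≤ t := by
      intro t ht
      exact hfin.toFinset.min'_le t (by rwa [Set.Finite.mem_toFinset])
    obtain ⟨⟨hat₁, ht₁b⟩, hft₁⟩ := ht₁Z
    -- f is negative on (a, t₁)
    have negL : ∀ s, a < s → s < t₁ → f s < 0 := by
      intro s has hst
      have hsb : s < b := hst.trans ht₁b
      have hne0 : f s ≠ 0 := by
        intro h
        have : s ∈ Z := ⟨⟨has, hsb⟩, h⟩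
        exact absurd (ht₁min s this) (not_le.2 hst)
      rcases lt_or_gt_of_ne hne0 with h | h
      · exact h
      · exfalso
        obtain ⟨c, hc, hfc⟩ := intermediate_value_Ioo has.le hf.continuousOn
          (show (0:ℝ) ∈ Set.Ioo (f a) (f s) from ⟨ha, h⟩)
        have : c ∈ Z := ⟨⟨hc.1, hc.2.trans hsb⟩, hfc⟩
        exact absurd (ht₁min c this) (not_le.2 (hc.2.trans hst))
    obtain ⟨δ₁, hδ₁, hsgn₁⟩ := hsign t₁ ⟨⟨hat₁, ht₁b⟩, hft₁⟩
    -- f is positive just right of t₁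
    have posR : ∀ s', t₁ < s' → s' < t₁ + δ₁ → 0 < f s' := by
      intro s' h1 h2
      set s0 := (max a (t₁ - δ₁) + t₁) / 2 with hs0
      have hm : max a (t₁ - δ₁) < t₁ := max_lt hat₁ (by linarith)
      have hs0lt : s0 < t₁ := by
        have := hm; simp only [hs0]; linarith
      have hs0gta : a < s0 := by
        have := le_max_left a (t₁ - δ₁); simp only [hs0]; linarith
      have hs0gtδ : t₁ - δ₁ < s0 := by
        have := le_max_right a (t₁ - δ₁); simp only [hs0]; linarith
      have hfs0 : f s0 < 0 := negL s0 hs0gta hs0lt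
      have := hsgn₁ s0 s' hs0gtδ hs0lt h1 h2
      by_contra hcon
      push_neg at hcon
      have : f s0 * f s' ≥ 0 := mul_nonneg_of_nonpos_of_nonpos hfs0.le hcon
      linarith
    -- there is a zero greater than t₁
    have hZne2 : (Z ∩ Set.Ioi t₁).Nonempty := by
      set s' := (t₁ + min b (t₁ + δ₁)) / 2 with hs'
      have hm : t₁ < min b (t₁ + δ₁) := lt_min ht₁b (by linarith)
      have h1 : t₁ < s' := by simp only [hs']; linarith
      have h2 : s' < b := by
        have := min_le_left b (t₁ + δ₁); simp only [hs']; linarith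
      have h3 : s' < t₁ + δ₁ := by
        have := min_le_right b (t₁ + δ₁); simp only [hs']; linarith
      have hfs' : 0 < f s' := posR s' h1 h3
      obtain ⟨c, hc, hfc⟩ := intermediate_value_Ioo' h2.le hf.continuousOn
        (show (0:ℝ) ∈ Set.Ioo (f b) (f s') from ⟨hb, hfs'⟩)
      exact ⟨c, ⟨⟨hat₁.trans (h1.trans hc.1), hc.2⟩, hfc⟩, h1.trans hc.1⟩
    have hfin2 : (Z ∩ Set.Ioi t₁).Finite := hfin.inter_of_left _
    have hne2 : hfin2.toFinset.Nonempty := by rwa [Set.Finite.toFinset_nonempty]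
    set t₂ := hfin2.toFinset.min' hne2 with ht₂def
    have ht₂mem : t₂ ∈ Z ∩ Set.Ioi t₁ := by
      have := hfin2.toFinset.min'_mem hne2
      rwa [Set.Finite.mem_toFinset] at this
    have ht₂min : ∀ t ∈ Z ∩ Set.Ioi t₁, t₂ ≤ t := by
      intro t ht
      exact hfin2.toFinset.min'_le t (by rwa [Set.Finite.mem_toFinset])
    obtain ⟨⟨⟨hat₂, ht₂b⟩, hft₂⟩, ht₁t₂⟩ := ht₂mem
    have ht₁t₂' : t₁ < t₂ := ht₁t₂
    -- f positive on (t₁, t₂)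
    have posM : ∀ s, t₁ < s → s < t₂ → 0 < f s := by
      intro s h1 h2
      have hsab : s ∈ Set.Ioo a b := ⟨hat₁.trans h1, h2.trans ht₂b⟩
      have hne0 : f s ≠ 0 := by
        intro h
        have : s ∈ Z ∩ Set.Ioi t₁ := ⟨⟨hsab, h⟩, h1⟩
        exact absurd (ht₂min s this) (not_le.2 h2)
      rcases lt_or_gt_of_ne hne0 with h | h
      · exfalso
        set s0 := (t₁ + min s (t₁ + δ₁)) / 2 with hs0
        have hm : t₁ < min s (t₁ + δ₁) := lt_min h1 (by linarith)
        have h3 : t₁ < s0 := by simp only [hs0]; linarith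
        have h4 : s0 < s := by
          have := min_le_left s (t₁ + δ₁); simp only [hs0]; linarith
        have h5 : s0 < t₁ + δ₁ := by
          have := min_le_right s (t₁ + δ₁); simp only [hs0]; linarith
        have hfs0 : 0 < f s0 := posR s0 h3 h5
        obtain ⟨c, hc, hfc⟩ := intermediate_value_Ioo' h4.le hf.continuousOn
          (show (0:ℝ) ∈ Set.Ioo (f s) (f s0) from ⟨h, hfs0⟩)
        have hcZ : c ∈ Z ∩ Set.Ioi t₁ :=
          ⟨⟨⟨hat₁.trans (h3.trans hc.1), (hc.2.trans h2).trans ht₂b⟩, hfc⟩, h3.trans hc.1⟩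
        exact absurd (ht₂min c hcZ) (not_le.2 (hc.2.trans h2))
      · exact h
    obtain ⟨δ₂, hδ₂, hsgn₂⟩ := hsign t₂ ⟨⟨hat₂, ht₂b⟩, hft₂⟩
    -- f negative just right of t₂
    have negR : ∀ s', t₂ < s' → s' < t₂ + δ₂ → f s' < 0 := by
      intro s' h1 h2
      set s0 := (max t₁ (t₂ - δ₂) + t₂) / 2 with hs0
      have hm : max t₁ (t₂ - δ₂) < t₂ := max_lt ht₁t₂' (by linarith)
      have h3 : s0 < t₂ := by simp only [hs0]; linarith
      have h4 : t₁ < s0 := by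
        have := le_max_left t₁ (t₂ - δ₂); simp only [hs0]; linarith
      have h5 : t₂ - δ₂ < s0 := by
        have := le_max_right t₁ (t₂ - δ₂); simp only [hs0]; linarith
      have hfs0 : 0 < f s0 := posM s0 h4 h3
      have := hsgn₂ s0 s' h5 h3 h1 h2
      by_contra hcon
      push_neg at hcon
      have : f s0 * f s' ≥ 0 := mul_nonneg hfs0.le hcon
      linarith
    -- pick c just right of t₂, below every other zero
    have hufin : ((Z ∪ {min b (t₂ + δ₂)}) ∩ Set.Ioi t₂).Finite :=
      (hfin.union (Set.finite_singleton _)).inter_of_left _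
    have hu : t₂ < min b (t₂ + δ₂) := lt_min ht₂b (by linarith)
    have huneS : hufin.toFinset.Nonempty := by
      rw [Set.Finite.toFinset_nonempty]
      exact ⟨min b (t₂ + δ₂), Or.inr rfl, hu⟩
    set m := hufin.toFinset.min' huneS with hmdef
    have hmmem : m ∈ (Z ∪ {min b (t₂ + δ₂)}) ∩ Set.Ioi t₂ := by
      have := hufin.toFinset.min'_mem huneS
      rwa [Set.Finite.mem_toFinset] at this
    have hmmin : ∀ t ∈ (Z ∪ {min b (t₂ + δ₂)}) ∩ Set.Ioi t₂, m ≤ t := by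
      intro t ht
      exact hufin.toFinset.min'_le t (by rwa [Set.Finite.mem_toFinset])
    have hmle : m ≤ min b (t₂ + δ₂) := hmmin _ ⟨Or.inr rfl, hu⟩
    have ht₂m : t₂ < m := hmmem.2
    set c := (t₂ + m) / 2 with hcdef
    have hc1 : t₂ < c := by simp only [hcdef]; linarith
    have hc2 : c < m := by simp only [hcdef]; linarith
    have hcb : c < b := lt_of_lt_of_le hc2 (hmle.trans (min_le_left _ _))
    have hcδ : c < t₂ + δ₂ := lt_of_lt_of_le hc2 (hmle.trans (min_le_right _ _))
    have hfc : f c < 0 := negR c hc1 hcδ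
    -- the new zero set
    set Z₂ := {t ∈ Set.Ioo c b | f t = 0} with hZ₂
    have hZ₂eq : Z₂ = Z \ {t₁, t₂} := by
      ext t
      constructor
      · rintro ⟨⟨hct, htb⟩, hft⟩
        have ht₂t : t₂ < t := hc1.trans hct
        refine ⟨⟨⟨hat₂.trans ht₂t, htb⟩, hft⟩, ?_⟩
        simp only [Set.mem_insert_iff, Set.mem_singleton_iff]
        push_neg
        exact ⟨ne_of_gt (ht₁t₂'.trans ht₂t), ne_of_gt ht₂t⟩
      · rintro ⟨htZ, htne⟩
        simp only [Set.mem_insert_iff, Set.mem_singleton_iff] at htne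
        push_neg at htne
        have h1 : t₁ < t := lt_of_le_of_ne (ht₁min t htZ) (Ne.symm htne.1)
        have h2 : t₂ < t := lt_of_le_of_ne (ht₂min t ⟨htZ, h1⟩) (Ne.symm htne.2)
        have h3 : m ≤ t := hmmin t ⟨Or.inl htZ, h2⟩
        exact ⟨⟨hc2.trans_le h3, htZ.1.2⟩, htZ.2⟩
    have hpairZ : {t₁, t₂} ⊆ Z :=
      Set.insert_subset ⟨⟨hat₁, ht₁b⟩, hft₁⟩ (Set.singleton_subset_iff.2 ⟨⟨hat₂, ht₂b⟩, hft₂⟩)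
    have hpaircard : ({t₁, t₂} : Set ℝ).ncard = 2 :=
      Set.ncard_pair (ne_of_lt ht₁t₂')
    have hn2 : 2 ≤ n := by
      rw [← hcard, ← hpaircard]
      exact Set.ncard_le_ncard hpairZ hfin
    have hZ₂card : Z₂.ncard = n - 2 := by
      rw [hZ₂eq, Set.ncard_diff hpairZ (Set.toFinite _), hpaircard, hcard]
    have hZ₂fin : Z₂.Finite := by
      rw [hZ₂eq]; exact hfin.diff
    have hZ₂sign : ∀ t₀ ∈ Z₂, ∃ δ > (0 : ℝ),
        ∀ s s', t₀ - δ < s → s < t₀ → t₀ < s' → s' < t₀ + δ → f s * f s' < 0 := by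
      intro t₀ ht₀
      exact hsign t₀ ((hZ₂eq ▸ ht₀).1)
    have hIH := IH (n - 2) (by omega) f hf c b hcb hfc hb hZ₂fin hZ₂sign hZ₂card
    rw [Nat.even_iff] at hIH ⊢
    omega

/-- A continuous function which is negative at both `0` and `T > 0` and whose
zeros in `(0,T)` are finitely many transverse (sign-changing) crossings has an
even number of such zeros. -/
theorem even_sign_changes
    (f : ℝ → ℝ) (hf : Continuous f) (T : ℝ) (hT : 0 < T)
    (h0 : f 0 < 0) (hT' : f T < 0)
    (hfin : {t ∈ Set.Ioo 0 T | f t = 0}.Finite)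
    (hsign : ∀ t₀ ∈ {t ∈ Set.Ioo 0 T | f t = 0}, ∃ δ > (0 : ℝ),
      ∀ s s', t₀ - δ < s → s < t₀ → t₀ < s' → s' < t₀ + δ →
        f s * f s' < 0) :
    Even {t ∈ Set.Ioo 0 T | f t = 0}.ncard := by
  exact even_sign_changes_aux _ f hf 0 T hT h0 hT' hfin hsign rfl
end
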